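/- arXiv:1202.1319 — 2 statements merged into one kernel-verified Lean document; each statement's English description precedes it below -/
import Mathlib

section
/- Let $d \geq 2$ be an integer and let $(J_n)_{n \geq 0}$ be the Markov chain on $\mathbb{N}$ with $J_0 = 0$, transitioning from $0$ to $1$ with probability $1$, and from $k \geq 1$ to $k+1$ with probability $d/(d+1)$ and to $k-1$ with probability $1/(d+1)$. Then for every $n \in \mathbb{N}$, $\mathbb{P}\big(J_m \leq J_n \text{ for all } 0 \leq m \leq n\big) \geq 1 - 2/d$. -/
open MeasureTheory ProbabilityTheory ENNReal

set_option linter.unusedSectionVars false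
set_option linter.unusedVariables false

namespace Stmt10

variable {Ω : Type*} [MeasurableSpace Ω]

def ext (n : ℕ) (v : Fin (n+1) → ℕ) : ℕ → ℕ := fun i => if h : i < n + 1 then v ⟨i, h⟩ else 0

lemma ext_eq (n : ℕ) (v : Fin (n+1) → ℕ) (i : ℕ) (h : i ≤ n) :
    ext n v i = v ⟨i, by omega⟩ := by
  simp [ext, Nat.lt_succ_of_le h]

def cyl (J : ℕ → Ω → ℕ) (n : ℕ) (v : Fin (n+1) → ℕ) : Set Ω :=
  {ω | ∀ i ≤ n, J i ω = ext n v i}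

def Mv (n : ℕ) (v : Fin (n+1) → ℕ) : ℕ := (Finset.range (n+1)).sup (ext n v)

def Dv (n : ℕ) (v : Fin (n+1) → ℕ) : ℕ := Mv n v - ext n v n

def Mp (J : ℕ → Ω → ℕ) (n : ℕ) (ω : Ω) : ℕ := (Finset.range (n+1)).sup fun m => J m ω

def Bad (J : ℕ → Ω → ℕ) (n k : ℕ) : Set Ω := {ω | k ≤ Mp J n ω - J n ω}

lemma Mp_on_cyl {J : ℕ → Ω → ℕ} {n : ℕ} {v : Fin (n+1) → ℕ} {ω : Ω} (hω : ω ∈ cyl J n v) :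
    Mp J n ω = Mv n v :=
  Finset.sup_congr rfl fun m hm => hω m (Nat.lt_succ_iff.mp (Finset.mem_range.mp hm))

lemma Jn_on_cyl {J : ℕ → Ω → ℕ} {n : ℕ} {v : Fin (n+1) → ℕ} {ω : Ω} (hω : ω ∈ cyl J n v) :
    J n ω = ext n v n := hω n le_rfl

lemma le_Mv (n : ℕ) (v : Fin (n+1) → ℕ) : ext n v n ≤ Mv n v :=
  Finset.le_sup (Finset.mem_range.mpr (Nat.lt_succ_self n))

lemma Mp_succ (J : ℕ → Ω → ℕ) (n : ℕ) (ω : Ω) :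
    Mp J (n+1) ω = max (J (n+1) ω) (Mp J n ω) := by
  simp [Mp, Finset.range_add_one]

lemma cyl_meas (J : ℕ → Ω → ℕ) (hmeas : ∀ n, Measurable (J n)) (n : ℕ) (v : Fin (n+1) → ℕ) :
    MeasurableSet (cyl J n v) := by
  have h : cyl J n v = ⋂ i ∈ Finset.range (n+1), (J i) ⁻¹' {ext n v i} := by
    ext ω; simp [cyl, Nat.lt_succ_iff]
  rw [h]
  exact MeasurableSet.biInter (Set.to_countable _)
    fun i _ => (hmeas i) (measurableSet_singleton _)

lemma arith_up (M a k : ℕ) (haM : a ≤ M) (hk : 1 ≤ k) :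
    k ≤ max (a+1) M - (a+1) ↔ k + 1 ≤ M - a := by
  rcases le_total M (a+1) with h | h
  · rw [max_eq_left h]; omega
  · rw [max_eq_right h]; omega

lemma arith_down (M a b k : ℕ) (haM : a ≤ M) (hb : b + 1 = a) :
    k ≤ max b M - b ↔ k ≤ (M - a) + 1 := by
  rw [max_eq_right (by omega)]; omega

lemma ennreal_sum (d : ℕ) :
    (d : ℝ≥0∞) / ((d : ℝ≥0∞) + 1) + 1 / ((d : ℝ≥0∞) + 1) = 1 := by
  rw [ENNReal.div_add_div_same, ENNReal.div_self]
  · simp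
  · exact ENNReal.add_ne_top.mpr ⟨ENNReal.natCast_ne_top d, ENNReal.one_ne_top⟩

lemma cyl_step (μ : Measure Ω) [IsProbabilityMeasure μ] (d : ℕ) (hd : 2 ≤ d)
    (J : ℕ → Ω → ℕ) (hmeas : ∀ n, Measurable (J n))
    (hup : ∀ (n : ℕ) (j : ℕ → ℕ),
      μ ({ω | ∀ i ≤ n, J i ω = j i} ∩ {ω | J (n + 1) ω = j n + 1}) =
        μ {ω | ∀ i ≤ n, J i ω = j i} *
          (if j n = 0 then 1 else (d : ℝ≥0∞) / ((d : ℝ≥0∞) + 1)))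
    (hdown : ∀ (n : ℕ) (j : ℕ → ℕ),
      μ ({ω | ∀ i ≤ n, J i ω = j i} ∩ {ω | J (n + 1) ω + 1 = j n}) =
        μ {ω | ∀ i ≤ n, J i ω = j i} *
          (if j n = 0 then 0 else 1 / ((d : ℝ≥0∞) + 1)))
    (n : ℕ) (v : Fin (n+1) → ℕ) (k : ℕ) (hk : 1 ≤ k) :
    μ (Bad J (n+1) k ∩ cyl J n v) ≤
      (d : ℝ≥0∞) / ((d : ℝ≥0∞) + 1) * (if k + 1 ≤ Dv n v then μ (cyl J n v) else 0) +
      1 / ((d : ℝ≥0∞) + 1) * (if k ≤ Dv n v + 1 then μ (cyl J n v) else 0) := by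
  set a := ext n v n with ha
  set C := cyl J n v with hC
  set U : Set Ω := {ω | J (n+1) ω = a + 1} with hUdef
  set W : Set Ω := {ω | J (n+1) ω + 1 = a} with hWdef
  have hCm : MeasurableSet C := cyl_meas J hmeas n v
  have hUm : MeasurableSet U := by
    have : U = (J (n+1)) ⁻¹' {a + 1} := by ext ω; simp [hUdef]
    rw [this]; exact (hmeas (n+1)) (measurableSet_singleton _)
  have hWm : MeasurableSet W := by
    have : W = (J (n+1)) ⁻¹' {a - 1} ∩ (J (n+1)) ⁻¹' {b | b + 1 = a} := by
      ext ω; simp only [hWdef, Set.mem_setOf_eq, Set.mem_inter_iff, Set.mem_preimage,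
        Set.mem_singleton_iff]
      omega
    rw [this]
    exact ((hmeas (n+1)) (measurableSet_singleton _)).inter ((hmeas (n+1)) trivial)
  have hU : μ (C ∩ U) = μ C * (if a = 0 then 1 else (d : ℝ≥0∞) / ((d : ℝ≥0∞) + 1)) :=
    hup n (ext n v)
  have hW : μ (C ∩ W) = μ C * (if a = 0 then 0 else 1 / ((d : ℝ≥0∞) + 1)) :=
    hdown n (ext n v)
  have hUWdisj : Disjoint (C ∩ U) (C ∩ W) := by
    refine Set.disjoint_left.mpr fun ω h1 h2 => ?_
    have e1 : J (n+1) ω = a + 1 := h1.2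
    have e2 : J (n+1) ω + 1 = a := h2.2
    omega
  have hUW : μ (C ∩ (U ∪ W)) = μ C := by
    rw [Set.inter_union_distrib_left, measure_union hUWdisj (hCm.inter hWm), hU, hW]
    rw [← mul_add]
    by_cases h0 : a = 0
    · simp [h0]
    · rw [if_neg h0, if_neg h0, ennreal_sum, mul_one]
  have hR : μ (C \ (U ∪ W)) = 0 := by
    have h := measure_inter_add_diff (μ := μ) C (hUm.union hWm)
    rw [hUW] at h
    by_contra hne
    have hlt : μ C < μ C + μ (C \ (U ∪ W)) :=
      ENNReal.lt_add_right (measure_ne_top μ C) hne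
    rw [h] at hlt
    exact lt_irrefl _ hlt
  have haM : a ≤ Mv n v := le_Mv n v
  -- subset decomposition
  have hsub : Bad J (n+1) k ∩ C ⊆ (C ∩ U ∩ Bad J (n+1) k) ∪ (C ∩ W ∩ Bad J (n+1) k)
      ∪ (C \ (U ∪ W)) := by
    intro ω ⟨hb, hc⟩
    by_cases hu : ω ∈ U
    · exact Or.inl (Or.inl ⟨⟨hc, hu⟩, hb⟩)
    · by_cases hw : ω ∈ W
      · exact Or.inl (Or.inr ⟨⟨hc, hw⟩, hb⟩)
      · exact Or.inr ⟨hc, fun h => h.elim hu hw⟩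
  -- identify the two pieces
  have hAU : C ∩ U ∩ Bad J (n+1) k = if k + 1 ≤ Dv n v then C ∩ U else ∅ := by
    split_ifs with h
    · refine Set.inter_eq_left.mpr fun ω hω => ?_
      show k ≤ Mp J (n+1) ω - J (n+1) ω
      have hu : J (n+1) ω = a + 1 := hω.2
      rw [Mp_succ, hu, Mp_on_cyl hω.1]
      exact (arith_up (Mv n v) a k haM hk).mpr h
    · ext ω
      simp only [Set.mem_inter_iff, Set.mem_empty_iff_false, iff_false, not_and]
      rintro ⟨hc, hu⟩ hb
      apply h
      have hb' : k ≤ Mp J (n+1) ω - J (n+1) ω := hb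
      rw [Mp_succ, (show J (n+1) ω = a + 1 from hu), Mp_on_cyl hc] at hb'
      exact (arith_up (Mv n v) a k haM hk).mp hb'
  have hAW : C ∩ W ∩ Bad J (n+1) k = if k ≤ Dv n v + 1 then C ∩ W else ∅ := by
    split_ifs with h
    · refine Set.inter_eq_left.mpr fun ω hω => ?_
      show k ≤ Mp J (n+1) ω - J (n+1) ω
      have hw : J (n+1) ω + 1 = a := hω.2
      rw [Mp_succ, Mp_on_cyl hω.1]
      exact (arith_down (Mv n v) a (J (n+1) ω) k haM hw).mpr h
    · ext ω
      simp only [Set.mem_inter_iff, Set.mem_empty_iff_false, iff_false, not_and]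
      rintro ⟨hc, hw⟩ hb
      apply h
      have hb' : k ≤ Mp J (n+1) ω - J (n+1) ω := hb
      rw [Mp_succ, Mp_on_cyl hc] at hb'
      exact (arith_down (Mv n v) a (J (n+1) ω) k haM hw).mp hb'
  have hbound : μ (Bad J (n+1) k ∩ C) ≤
      (if k + 1 ≤ Dv n v then μ (C ∩ U) else 0) +
      (if k ≤ Dv n v + 1 then μ (C ∩ W) else 0) := by
    calc μ (Bad J (n+1) k ∩ C)
        ≤ μ ((C ∩ U ∩ Bad J (n+1) k) ∪ (C ∩ W ∩ Bad J (n+1) k) ∪ (C \ (U ∪ W))) :=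
          measure_mono hsub
      _ ≤ μ (C ∩ U ∩ Bad J (n+1) k) + μ (C ∩ W ∩ Bad J (n+1) k) + μ (C \ (U ∪ W)) :=
          le_trans (measure_union_le _ _) (add_le_add_left (measure_union_le _ _) _)
      _ = μ (C ∩ U ∩ Bad J (n+1) k) + μ (C ∩ W ∩ Bad J (n+1) k) := by rw [hR, add_zero]
      _ = (if k + 1 ≤ Dv n v then μ (C ∩ U) else 0) +
          (if k ≤ Dv n v + 1 then μ (C ∩ W) else 0) := by
          rw [hAU, hAW]
          congr 1 <;> (split_ifs <;> simp)
  refine hbound.trans ?_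
  by_cases h0 : a = 0
  · rw [hU, hW, if_pos h0, if_pos h0, mul_one, mul_zero]
    rw [ite_self, add_zero]
    by_cases hc1 : k + 1 ≤ Dv n v
    · have hc2 : k ≤ Dv n v + 1 := by omega
      rw [if_pos hc1, if_pos hc2]
      have he : (d : ℝ≥0∞) / ((d : ℝ≥0∞) + 1) * μ C + 1 / ((d : ℝ≥0∞) + 1) * μ C = μ C := by
        rw [← add_mul, ennreal_sum d, one_mul]
      exact le_of_eq he.symm
    · rw [if_neg hc1]
      exact zero_le
  · rw [hU, hW, if_neg h0, if_neg h0]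
    have e1 : (if k + 1 ≤ Dv n v then μ C * ((d : ℝ≥0∞) / ((d : ℝ≥0∞) + 1)) else 0)
        = (d : ℝ≥0∞) / ((d : ℝ≥0∞) + 1) * (if k + 1 ≤ Dv n v then μ C else 0) := by
      split_ifs <;> simp [mul_comm]
    have e2 : (if k ≤ Dv n v + 1 then μ C * (1 / ((d : ℝ≥0∞) + 1)) else 0)
        = 1 / ((d : ℝ≥0∞) + 1) * (if k ≤ Dv n v + 1 then μ C else 0) := by
      split_ifs <;> simp [mul_comm]
    rw [e1, e2]


lemma mem_cyl_self (J : ℕ → Ω → ℕ) (n : ℕ) (ω : Ω) :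
    ω ∈ cyl J n (fun i : Fin (n+1) => J i ω) := by
  intro i hi
  rw [ext_eq n _ i hi]

lemma cyl_unique {J : ℕ → Ω → ℕ} {n : ℕ} {v w : Fin (n+1) → ℕ} {ω : Ω}
    (hv : ω ∈ cyl J n v) (hw : ω ∈ cyl J n w) : v = w := by
  funext i
  have h1 := hv i.1 (Nat.lt_succ_iff.mp i.2)
  have h2 := hw i.1 (Nat.lt_succ_iff.mp i.2)
  rw [ext_eq n v i.1 (Nat.lt_succ_iff.mp i.2)] at h1
  rw [ext_eq n w i.1 (Nat.lt_succ_iff.mp i.2)] at h2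
  rw [← h1, ← h2]

lemma decomp (μ : Measure Ω) (J : ℕ → Ω → ℕ) (hmeas : ∀ n, Measurable (J n)) (n : ℕ)
    {E : Set Ω} (hE : MeasurableSet E) :
    μ E = ∑' v : Fin (n+1) → ℕ, μ (E ∩ cyl J n v) := by
  have hdisj : Pairwise (Function.onFun Disjoint fun v : Fin (n+1) → ℕ => E ∩ cyl J n v) := by
    intro v w hvw
    refine Set.disjoint_left.mpr fun ω h1 h2 => hvw ?_
    exact cyl_unique h1.2 h2.2
  rw [← measure_iUnion hdisj fun v => hE.inter (cyl_meas J hmeas n v)]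
  congr 1
  ext ω
  constructor
  · intro hω
    exact Set.mem_iUnion.2 ⟨fun i => J i ω, hω, mem_cyl_self J n ω⟩
  · rintro ⟨s, ⟨w, rfl⟩, hω⟩
    exact hω.1

lemma Bad_inter_cyl (J : ℕ → Ω → ℕ) (m k : ℕ) (v : Fin (m+1) → ℕ) :
    Bad J m k ∩ cyl J m v = if k ≤ Dv m v then cyl J m v else ∅ := by
  split_ifs with h
  · refine Set.inter_eq_right.mpr fun ω hω => ?_
    show k ≤ Mp J m ω - J m ω
    rw [Mp_on_cyl hω, Jn_on_cyl hω]
    exact h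
  · ext ω
    simp only [Set.mem_inter_iff, Set.mem_empty_iff_false, iff_false, not_and]
    intro hb hc
    apply h
    have hb' : k ≤ Mp J m ω - J m ω := hb
    rwa [Mp_on_cyl hc, Jn_on_cyl hc] at hb'

lemma bad_meas (J : ℕ → Ω → ℕ) (hmeas : ∀ n, Measurable (J n)) (m k : ℕ) :
    MeasurableSet (Bad J m k) := by
  have h : Bad J m k = ⋃ v : Fin (m+1) → ℕ, (Bad J m k ∩ cyl J m v) := by
    ext ω
    constructor
    · intro hω
      exact Set.mem_iUnion.2 ⟨fun i => J i ω, hω, mem_cyl_self J m ω⟩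
    · rintro ⟨s, ⟨w, rfl⟩, hω⟩
      exact hω.1
  rw [h]
  refine MeasurableSet.iUnion fun v => ?_
  rw [Bad_inter_cyl]
  split_ifs
  · exact cyl_meas J hmeas m v
  · exact MeasurableSet.empty

lemma ennreal_rec (d : ℕ) (hd : 2 ≤ d) (k : ℕ) (hk : 1 ≤ k) :
    (d : ℝ≥0∞) / ((d : ℝ≥0∞) + 1) * ((d : ℝ≥0∞)⁻¹) ^ (k+1)
      + 1 / ((d : ℝ≥0∞) + 1) * ((d : ℝ≥0∞)⁻¹) ^ (k-1)
      = ((d : ℝ≥0∞)⁻¹) ^ k := by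
  set x : ℝ≥0∞ := (d : ℝ≥0∞) with hx
  have hx0 : x ≠ 0 := by
    simp [hx]; omega
  have hxt : x ≠ ⊤ := ENNReal.natCast_ne_top d
  obtain ⟨k', rfl⟩ : ∃ k', k = k' + 1 := ⟨k - 1, by omega⟩
  have e1 : x⁻¹ ^ (k' + 1 + 1) = x⁻¹ * x⁻¹ ^ (k' + 1) := by
    rw [pow_succ, mul_comm]
  have e2 : x⁻¹ ^ (k' + 1 - 1) = x * x⁻¹ ^ (k' + 1) := by
    have h : x * x⁻¹ ^ (k' + 1) = (x * x⁻¹) * x⁻¹ ^ k' := by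
      rw [pow_succ]; ring
    rw [h, ENNReal.mul_inv_cancel hx0 hxt, one_mul]
    simp
  rw [e1, e2]
  have key : x / (x + 1) * x⁻¹ + 1 / (x + 1) * x = 1 := by
    have h1 : x / (x + 1) * x⁻¹ = 1 / (x + 1) := by
      rw [div_eq_mul_inv, div_eq_mul_inv, mul_comm x (x+1)⁻¹, mul_assoc,
        ENNReal.mul_inv_cancel hx0 hxt, mul_one, one_mul]
    rw [h1]
    have h2 : 1 / (x + 1) * x = x / (x + 1) := by
      rw [div_eq_mul_inv, div_eq_mul_inv, one_mul, mul_comm]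
    rw [h2, add_comm]
    rw [ENNReal.div_add_div_same,
      ENNReal.div_self (by simp) (ENNReal.add_ne_top.mpr ⟨hxt, ENNReal.one_ne_top⟩)]
  calc x / (x + 1) * (x⁻¹ * x⁻¹ ^ (k' + 1)) + 1 / (x + 1) * (x * x⁻¹ ^ (k' + 1))
      = (x / (x + 1) * x⁻¹ + 1 / (x + 1) * x) * x⁻¹ ^ (k' + 1) := by ring
    _ = x⁻¹ ^ (k' + 1) := by rw [key, one_mul]

lemma recur (μ : Measure Ω) [IsProbabilityMeasure μ] (d : ℕ) (hd : 2 ≤ d)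
    (J : ℕ → Ω → ℕ) (hmeas : ∀ n, Measurable (J n))
    (hup : ∀ (n : ℕ) (j : ℕ → ℕ),
      μ ({ω | ∀ i ≤ n, J i ω = j i} ∩ {ω | J (n + 1) ω = j n + 1}) =
        μ {ω | ∀ i ≤ n, J i ω = j i} *
          (if j n = 0 then 1 else (d : ℝ≥0∞) / ((d : ℝ≥0∞) + 1)))
    (hdown : ∀ (n : ℕ) (j : ℕ → ℕ),
      μ ({ω | ∀ i ≤ n, J i ω = j i} ∩ {ω | J (n + 1) ω + 1 = j n}) =
        μ {ω | ∀ i ≤ n, J i ω = j i} *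
          (if j n = 0 then 0 else 1 / ((d : ℝ≥0∞) + 1)))
    (n k : ℕ) (hk : 1 ≤ k) :
    μ (Bad J (n+1) k) ≤ (d : ℝ≥0∞) / ((d : ℝ≥0∞) + 1) * μ (Bad J n (k+1))
      + 1 / ((d : ℝ≥0∞) + 1) * μ (Bad J n (k-1)) := by
  have h1 : μ (Bad J n (k+1))
      = ∑' v : Fin (n+1) → ℕ, (if k + 1 ≤ Dv n v then μ (cyl J n v) else 0) := by
    rw [decomp μ J hmeas n (bad_meas J hmeas n (k+1))]
    refine tsum_congr fun v => ?_
    rw [Bad_inter_cyl]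
    split_ifs <;> simp
  have h2 : μ (Bad J n (k-1))
      = ∑' v : Fin (n+1) → ℕ, (if k ≤ Dv n v + 1 then μ (cyl J n v) else 0) := by
    rw [decomp μ J hmeas n (bad_meas J hmeas n (k-1))]
    refine tsum_congr fun v => ?_
    rw [Bad_inter_cyl]
    by_cases h : k - 1 ≤ Dv n v
    · rw [if_pos h, if_pos (by omega)]
    · rw [if_neg h, if_neg (by omega)]
      simp
  rw [decomp μ J hmeas n (bad_meas J hmeas (n+1) k), h1, h2,
    ← ENNReal.tsum_mul_left, ← ENNReal.tsum_mul_left, ← ENNReal.tsum_add]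
  exact ENNReal.tsum_le_tsum fun v => cyl_step μ d hd J hmeas hup hdown n v k hk

lemma invariant (μ : Measure Ω) [IsProbabilityMeasure μ] (d : ℕ) (hd : 2 ≤ d)
    (J : ℕ → Ω → ℕ) (hmeas : ∀ n, Measurable (J n)) (hJ0 : ∀ ω, J 0 ω = 0)
    (hup : ∀ (n : ℕ) (j : ℕ → ℕ),
      μ ({ω | ∀ i ≤ n, J i ω = j i} ∩ {ω | J (n + 1) ω = j n + 1}) =
        μ {ω | ∀ i ≤ n, J i ω = j i} *
          (if j n = 0 then 1 else (d : ℝ≥0∞) / ((d : ℝ≥0∞) + 1)))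
    (hdown : ∀ (n : ℕ) (j : ℕ → ℕ),
      μ ({ω | ∀ i ≤ n, J i ω = j i} ∩ {ω | J (n + 1) ω + 1 = j n}) =
        μ {ω | ∀ i ≤ n, J i ω = j i} *
          (if j n = 0 then 0 else 1 / ((d : ℝ≥0∞) + 1))) :
    ∀ n k, μ (Bad J n k) ≤ ((d : ℝ≥0∞)⁻¹) ^ k := by
  intro n
  induction n with
  | zero =>
    intro k
    rcases Nat.eq_zero_or_pos k with rfl | hk
    · simpa using prob_le_one
    · have hempty : Bad J 0 k = ∅ := by
        ext ω
        have hM : Mp J 0 ω = J 0 ω := by simp [Mp]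
        simp only [Bad, Set.mem_setOf_eq, Set.mem_empty_iff_false, iff_false, not_le, hM,
          hJ0 ω]
        omega
      simp [hempty]
  | succ n ih =>
    intro k
    rcases Nat.eq_zero_or_pos k with rfl | hk
    · simpa using prob_le_one
    · refine (recur μ d hd J hmeas hup hdown n k hk).trans ?_
      refine le_trans (add_le_add (mul_le_mul_right (ih (k+1)) _)
        (mul_le_mul_right (ih (k-1)) _)) ?_
      exact le_of_eq (ennreal_rec d hd k hk)

end Stmt10

/-- The jump chain of the distance-from-root process of random walk on the `d`-ary tree:
a Markov chain on ℕ started at 0, reflected at 0, stepping up with probability `d/(d+1)`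
and down with probability `1/(d+1)`, is at a running maximum at time `n` with probability
at least `1 - 2/d`. The Markov property is encoded through cylinder events. -/
theorem stmt_10 {Ω : Type*} [MeasurableSpace Ω] (μ : Measure Ω) [IsProbabilityMeasure μ]
    (d : ℕ) (hd : 2 ≤ d) (J : ℕ → Ω → ℕ) (hmeas : ∀ n, Measurable (J n))
    (hJ0 : ∀ ω, J 0 ω = 0)
    (hup : ∀ (n : ℕ) (j : ℕ → ℕ),
      μ ({ω | ∀ i ≤ n, J i ω = j i} ∩ {ω | J (n + 1) ω = j n + 1}) =
        μ {ω | ∀ i ≤ n, J i ω = j i} *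
          (if j n = 0 then 1 else (d : ℝ≥0∞) / ((d : ℝ≥0∞) + 1)))
    (hdown : ∀ (n : ℕ) (j : ℕ → ℕ),
      μ ({ω | ∀ i ≤ n, J i ω = j i} ∩ {ω | J (n + 1) ω + 1 = j n}) =
        μ {ω | ∀ i ≤ n, J i ω = j i} *
          (if j n = 0 then 0 else 1 / ((d : ℝ≥0∞) + 1))) :
    ∀ n : ℕ, ENNReal.ofReal (1 - 2 / (d:ℝ)) ≤ μ {ω | ∀ m ≤ n, J m ω ≤ J n ω} := by
  intro n
  have hinv := Stmt10.invariant μ d hd J hmeas hJ0 hup hdown n 1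
  rw [pow_one] at hinv
  have hset : {ω | ∀ m ≤ n, J m ω ≤ J n ω} = (Stmt10.Bad J n 1)ᶜ := by
    ext ω
    simp only [Set.mem_setOf_eq, Set.mem_compl_iff, Stmt10.Bad, not_le]
    constructor
    · intro h
      have hM : Stmt10.Mp J n ω ≤ J n ω :=
        Finset.sup_le fun m hm => h m (Nat.lt_succ_iff.mp (Finset.mem_range.mp hm))
      omega
    · intro h m hm
      have hle : J m ω ≤ Stmt10.Mp J n ω :=
        Finset.le_sup (f := fun i => J i ω) (Finset.mem_range.mpr (Nat.lt_succ_of_le hm))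
      omega
  rw [hset, prob_compl_eq_one_sub (Stmt10.bad_meas J hmeas n 1)]
  have hd0 : (0:ℝ) < d := by
    have : (0:ℕ) < d := by omega
    exact_mod_cast this
  have hle : ENNReal.ofReal (1 - 2/(d:ℝ)) ≤ ENNReal.ofReal (1 - 1/(d:ℝ)) := by
    apply ENNReal.ofReal_le_ofReal
    have h1 : (0:ℝ) ≤ 1/(d:ℝ) := by positivity
    have h2 : (2:ℝ)/(d:ℝ) = 1/(d:ℝ) + 1/(d:ℝ) := by ring
    linarith
  have heq : ENNReal.ofReal (1 - 1/(d:ℝ)) = 1 - (d:ℝ≥0∞)⁻¹ := by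
    rw [ENNReal.ofReal_sub _ (by positivity), ENNReal.ofReal_one]
    congr 1
    rw [one_div, ENNReal.ofReal_inv_of_pos hd0, ENNReal.ofReal_natCast]
  calc ENNReal.ofReal (1 - 2/(d:ℝ)) ≤ 1 - (d:ℝ≥0∞)⁻¹ := heq ▸ hle
    _ ≤ 1 - μ (Stmt10.Bad J n 1) := tsub_le_tsub_left hinv 1
end

section
/- Let $d \geq 39$ be an integer and set $T = 429/d$, $c_1^* = d/18$, and $c_2^* = \frac{3(d-1)}{4(d+1)}\big(1 - e^{-(d-1)T/2}\big)$. Then $c_2^*\, c_1^*\, T - 2(1 - c_2^*) > 0$. -/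
theorem stmt_13 (d : ℕ) (hd : 39 ≤ d) :
    let T : ℝ := 429 / d
    let c₁ : ℝ := (d:ℝ) / 18
    let c₂ : ℝ := 3 * ((d:ℝ) - 1) / (4 * ((d:ℝ) + 1)) * (1 - Real.exp (-((d:ℝ) - 1) * T / 2))
    c₂ * c₁ * T - 2 * (1 - c₂) > 0 := by
  intro T c₁ c₂
  have hd' : (39:ℝ) ≤ d := by exact_mod_cast hd
  have hdpos : (0:ℝ) < d := by linarith
  have hTc : c₁ * T = 429 / 18 := by
    show (d:ℝ) / 18 * (429 / d) = 429 / 18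
    field_simp
  -- exponent bound
  have hexp : Real.exp (-((d:ℝ) - 1) * T / 2) ≤ 1/2 := by
    have h1 : -((d:ℝ) - 1) * T / 2 ≤ -1 := by
      show -((d:ℝ) - 1) * (429 / d) / 2 ≤ -1
      rw [show -((d:ℝ) - 1) * (429 / d) / 2 = -((d:ℝ) - 1) * 429 / (d * 2) by ring,
        div_le_iff₀ (by positivity)]
      nlinarith
    have h2 : Real.exp (-((d:ℝ) - 1) * T / 2) ≤ Real.exp (-1) := Real.exp_le_exp.mpr h1
    have h3 : (2:ℝ) ≤ Real.exp 1 := by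
      have := Real.add_one_le_exp (1:ℝ)
      linarith
    have h4 : Real.exp (-1 : ℝ) ≤ 1/2 := by
      rw [Real.exp_neg]
      rw [inv_le_comm₀ (by positivity) (by norm_num)]
      simpa using h3
    linarith
  have hexp0 : 0 < Real.exp (-((d:ℝ) - 1) * T / 2) := Real.exp_pos _
  have hk : (114:ℝ)/160 ≤ 3 * ((d:ℝ) - 1) / (4 * ((d:ℝ) + 1)) := by
    rw [le_div_iff₀ (by linarith)]
    linarith
  have hc₂ : (57:ℝ)/160 ≤ c₂ := by
    show (57:ℝ)/160 ≤ 3 * ((d:ℝ) - 1) / (4 * ((d:ℝ) + 1)) * (1 - Real.exp (-((d:ℝ) - 1) * T / 2))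
    nlinarith
  nlinarith [hc₂, hTc]
end
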